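/- Let c^i_{jk} (i,j,k = 1,…,n) be real numbers symmetric in (j,k) and associative, i.e. c^i_{jm} c^m_{kl} = c^i_{km} c^m_{jl} (sum over repeated indices). Suppose X ∈ ℝ^n and v^1,…,v^n ∈ ℝ are pairwise distinct with c^i_{jk} X^k = v^i δ^i_j for all i,j. Then c^i_{pq}(v^i − v^p) = 0 for all i,p,q, and consequently c^i_{pq} = 0 unless i = p = q. -/
import Mathlib


open scoped BigOperators

theorem statement_1 {n : ℕ} (c : Fin n → Fin n → Fin n → ℝ)
    (hcomm : ∀ i j k, c i j k = c i k j)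
    (hassoc : ∀ i j k l, ∑ m, c i j m * c m k l = ∑ m, c i k m * c m j l)
    (X : Fin n → ℝ) (v : Fin n → ℝ)
    (hdist : ∀ i j, i ≠ j → v i ≠ v j)
    (heig : ∀ i j, ∑ k, c i j k * X k = if i = j then v i else 0) :
    (∀ i p q, c i p q * (v i - v p) = 0) ∧
      (∀ i p q, ¬(i = p ∧ p = q) → c i p q = 0) := by
  -- contraction on the third index of the inner c
  have contract : ∀ (f : Fin n → ℝ) (b : Fin n),
      ∑ l, (∑ m, f m * c m b l) * X l = f b * v b := by
    intro f b
    calc ∑ l, (∑ m, f m * c m b l) * X l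
        = ∑ l, ∑ m, f m * (c m b l * X l) := by
          refine Finset.sum_congr rfl fun l _ => ?_
          rw [Finset.sum_mul]; exact Finset.sum_congr rfl fun m _ => by ring
      _ = ∑ m, ∑ l, f m * (c m b l * X l) := Finset.sum_comm
      _ = ∑ m, f m * (if m = b then v m else 0) := by
          refine Finset.sum_congr rfl fun m _ => ?_
          rw [← Finset.mul_sum, heig]
      _ = f b * v b := by simp [mul_ite]
  -- contraction on the second index of the outer c
  have contract2 : ∀ (g : Fin n → ℝ) (a : Fin n),
      ∑ k, (∑ m, c a k m * g m) * X k = v a * g a := by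
    intro g a
    calc ∑ k, (∑ m, c a k m * g m) * X k
        = ∑ k, ∑ m, (c a m k * X k) * g m := by
          refine Finset.sum_congr rfl fun k _ => ?_
          rw [Finset.sum_mul]
          exact Finset.sum_congr rfl fun m _ => by rw [hcomm a k m]; ring
      _ = ∑ m, (∑ k, c a m k * X k) * g m := by
          rw [Finset.sum_comm]
          exact Finset.sum_congr rfl fun m _ => (Finset.sum_mul _ _ _).symm
      _ = ∑ m, (if a = m then v a else 0) * g m := by
          refine Finset.sum_congr rfl fun m _ => ?_; rw [heig]
      _ = v a * g a := by simp [ite_mul]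
  -- relation 1:  c i p q * (v q - v p) = 0
  have rel1 : ∀ i p q, c i p q * v q = c i p q * v p := by
    intro i p q
    have h1 := contract (fun m => c i p m) q
    have h2 := contract (fun m => c i q m) p
    have h3 : (∑ l, (∑ m, c i p m * c m q l) * X l)
        = ∑ l, (∑ m, c i q m * c m p l) * X l :=
      Finset.sum_congr rfl fun l _ => by rw [hassoc i p q l]
    have : c i p q * v q = c i q p * v p := by
      rw [← h1, ← h2] at *; simpa using h3
    rw [this, hcomm i q p]
  -- relation 2:  c i p q * (v i - v q) = 0
  have rel2 : ∀ i p q, c i p q * v q = v i * c i p q := by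
    intro i p q
    have h1 : ∑ k, (∑ m, c i p m * c m k q) * X k = c i p q * v q := by
      calc ∑ k, (∑ m, c i p m * c m k q) * X k
          = ∑ k, (∑ m, c i p m * c m q k) * X k := by
            refine Finset.sum_congr rfl fun k _ => ?_
            congr 1
            exact Finset.sum_congr rfl fun m _ => by rw [hcomm m k q]
        _ = c i p q * v q := contract (fun m => c i p m) q
    have h2 : ∑ k, (∑ m, c i k m * c m p q) * X k = v i * c i p q :=
      contract2 (fun m => c m p q) i
    have h3 : (∑ k, (∑ m, c i p m * c m k q) * X k)
        = ∑ k, (∑ m, c i k m * c m p q) * X k :=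
      Finset.sum_congr rfl fun k _ => by rw [hassoc i p k q]
    rw [h1, h2] at h3
    exact h3
  have main : ∀ i p q, c i p q * (v i - v p) = 0 := by
    intro i p q
    have e1 := rel1 i p q
    have e2 := rel2 i p q
    linear_combination e1 - e2
  refine ⟨main, fun i p q h => ?_⟩
  by_cases hpq : p = q
  · have hip : i ≠ p := fun hip => h ⟨hip, hpq⟩
    have hv : v i - v p ≠ 0 := sub_ne_zero.mpr (hdist i p hip)
    have := main i p q
    exact (mul_eq_zero.mp this).resolve_right hv
  · have hv : v q - v p ≠ 0 := sub_ne_zero.mpr (hdist q p (Ne.symm hpq))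
    have e1 : c i p q * (v q - v p) = 0 := by linear_combination rel1 i p q
    exact (mul_eq_zero.mp e1).resolve_right hv
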